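/- There exists a universal constant c > 0 with the following property. Let N ≥ 2 and T ≥ 1 be integers and β ≥ 0 a real number. Let X = {1,…,N}, and let F = {f_1,…,f_N} where f_i : X → {0,1} is the threshold function f_i(j) = 1{j ≥ i}. Then for every map G assigning to each f ∈ F a finitely supported probability distribution over F, there exist an index i* ∈ {1,…,N}, a covariate sequence x^(1),…,x^(T) ∈ X, and a sequence f̂^(1),…,f̂^(T) ∈ F (proper estimators) such that: (i) for every t, ∑_{s=1}^{t−1} 1{f̂^(t)(x^(s)) ≠ f_{i*}(x^(s))} ≤ β; and (ii) ∑_{t=1}^{T} E_{f̄ ∼ G(f̂^(t))}[ 1{f̄(x^(t)) ≠ f_{i*}(x^(t))} ] ≥ c · min{ N(β+1), T }. -/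

import Mathlib

open Finset

/-- Impossibility of memoryless, proper, time-invariant oracle-efficient
algorithms for binary classification with 0/1 loss.  Here `X = Fin N` stands for `{1,…,N}`,
the class is the set of threshold functions `F = {f_i}` with `f_i(j) = 1{j ≥ i}` (encoded as
`decide (i ≤ j)` and parameterized by the index `i : Fin N`), and the learner's fixed map `G`
assigns to each (proper) offline estimator `f_i ∈ F` a probability distribution over `F`
(encoded as a distribution over indices).  For every such `G` there are a target index `i*`,
a covariate sequence, and a proper offline oracle `f̂^(t) = f_{ĵ(t)}` with parameter `β`
forcing online estimation error at least `c · min{N(β+1), T}`. -/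
theorem memoryless_impossibility_proper :
    ∃ c : ℝ, 0 < c ∧
      ∀ (N T : ℕ), 2 ≤ N → 1 ≤ T → ∀ β : ℝ, 0 ≤ β →
      ∀ G : Fin N → Fin N → ℝ,
        (∀ i j, 0 ≤ G i j) →
        (∀ i, ∑ j, G i j = 1) →
        ∃ (istar : Fin N) (x : ℕ → Fin N) (jhat : ℕ → Fin N),
          (∀ t ∈ Finset.Icc 1 T,
            ∑ s ∈ Finset.Icc 1 (t - 1),
              (if decide (jhat t ≤ x s) ≠ decide (istar ≤ x s) then (1 : ℝ) else 0) ≤ β) ∧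
          c * min ((N : ℝ) * (β + 1)) T ≤
            ∑ t ∈ Finset.Icc 1 T,
              ∑ k : Fin N,
                G (jhat t) k *
                  (if decide (k ≤ x t) ≠ decide (istar ≤ x t) then (1 : ℝ) else 0) := by
  refine ⟨1/8, by norm_num, ?_⟩
  intro N T hN hT β hβ G hG0 hG1
  have hT0 : (0:ℝ) ≤ (T:ℝ) := Nat.cast_nonneg T
  by_cases h : ∃ m : Fin N, (m : ℕ) < N - 1 ∧
      (1:ℝ)/2 ≤ ∑ k : Fin N, (if m < k then G m k else 0)
  · -- Plan A : a single point suffices, error ≥ 1/2 per round.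
    obtain ⟨m, hmlt, hS⟩ := h
    refine ⟨m, fun _ => m, fun _ => m, ?_, ?_⟩
    · intro t ht
      simpa using hβ
    · have hE : ∀ t : ℕ,
          (∑ k : Fin N, G m k *
            (if decide (k ≤ m) ≠ decide (m ≤ m) then (1:ℝ) else 0))
          = ∑ k : Fin N, (if m < k then G m k else 0) := by
        intro t
        refine Finset.sum_congr rfl fun k _ => ?_
        by_cases hk : k ≤ m
        · simp [hk, not_lt.mpr hk]
        · simp [hk, lt_of_not_ge hk]
      calc (1:ℝ)/8 * min ((N : ℝ) * (β + 1)) T ≤ (1:ℝ)/2 * T := by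
            have h1 : min ((N : ℝ) * (β + 1)) T ≤ T := min_le_right _ _
            have h2 : (0:ℝ) ≤ min ((N : ℝ) * (β + 1)) T :=
              le_min (by positivity) hT0
            linarith
        _ ≤ ∑ t ∈ Finset.Icc 1 T, ∑ k : Fin N,
              G m k * (if decide (k ≤ m) ≠ decide (m ≤ m) then (1:ℝ) else 0) := by
            have : ∀ t ∈ Finset.Icc 1 T, (1:ℝ)/2 ≤ ∑ k : Fin N,
                G m k * (if decide (k ≤ m) ≠ decide (m ≤ m) then (1:ℝ) else 0) := by
              intro t _
              rw [hE t]; exact hS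
            calc (1:ℝ)/2 * T = ∑ _t ∈ Finset.Icc 1 T, (1:ℝ)/2 := by
                  rw [Finset.sum_const, Nat.card_Icc]; simp; ring
              _ ≤ _ := Finset.sum_le_sum this
  · -- Plan B : chain of N-1 points, each repeated ⌊β⌋+1 times.
    push_neg at h
    set b := Nat.floor β with hb
    set Bn := b + 1 with hBn
    have hBpos : 0 < Bn := Nat.succ_pos b
    have histar : N - 1 < N := by omega
    set istar : Fin N := ⟨N-1, histar⟩ with histardef
    set φ : ℕ → Fin N :=
      fun t => ⟨min ((t-1)/Bn) (N-1), lt_of_le_of_lt (Nat.min_le_right _ _) histar⟩ with hφ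
    have hφval : ∀ t, (φ t : ℕ) = min ((t-1)/Bn) (N-1) := fun t => rfl
    refine ⟨istar, φ, φ, ?_, ?_⟩
    · -- properness constraint
      intro t ht
      by_cases hact : (t-1)/Bn < N - 1
      · set mt := (t-1)/Bn with hmt
        have hsum_le : ∀ s ∈ Finset.Icc 1 (t-1),
            (if decide (φ t ≤ φ s) ≠ decide (istar ≤ φ s) then (1:ℝ) else 0)
            ≤ (if mt*Bn + 1 ≤ s then (1:ℝ) else 0) := by
          intro s hs
          rw [Finset.mem_Icc] at hs
          by_cases hc : decide (φ t ≤ φ s) ≠ decide (istar ≤ φ s)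
          · rw [if_pos hc]
            have hsle : (s-1)/Bn ≤ mt := Nat.div_le_div_right (by omega)
            have hsval : (φ s : ℕ) = (s-1)/Bn := by
              rw [hφval]; exact min_eq_left (by omega)
            have htval : (φ t : ℕ) = mt := by
              rw [hφval]; exact min_eq_left (le_of_lt hact)
            have hist : ¬ (istar ≤ φ s) := by
              rw [Fin.le_def, hsval]; simp [istar]; omega
            have hts : φ t ≤ φ s := by
              by_contra hts
              exact hc (by simp [hts, hist])
            rw [Fin.le_def, htval, hsval] at hts
            have : mt * Bn ≤ s - 1 := (Nat.le_div_iff_mul_le hBpos).mp hts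
            rw [if_pos (by omega)]
          · rw [if_neg hc]
            split <;> norm_num
        calc ∑ s ∈ Finset.Icc 1 (t-1),
              (if decide (φ t ≤ φ s) ≠ decide (istar ≤ φ s) then (1:ℝ) else 0)
            ≤ ∑ s ∈ Finset.Icc 1 (t-1), (if mt*Bn + 1 ≤ s then (1:ℝ) else 0) :=
              Finset.sum_le_sum hsum_le
          _ = (((Finset.Icc 1 (t-1)).filter (fun s => mt*Bn + 1 ≤ s)).card : ℝ) := by
              rw [Finset.sum_boole]
          _ ≤ (b : ℝ) := by
              have hsub : (Finset.Icc 1 (t-1)).filter (fun s => mt*Bn + 1 ≤ s)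
                  ⊆ Finset.Icc (mt*Bn + 1) (t-1) := by
                intro s hs
                simp only [Finset.mem_filter, Finset.mem_Icc] at hs ⊢
                omega
              have hc1 : ((Finset.Icc 1 (t-1)).filter (fun s => mt*Bn + 1 ≤ s)).card
                  ≤ (Finset.Icc (mt*Bn + 1) (t-1)).card := Finset.card_le_card hsub
              have hc2 : (Finset.Icc (mt*Bn + 1) (t-1)).card = t - 1 + 1 - (mt*Bn + 1) :=
                Nat.card_Icc _ _
              have hlt : t - 1 < (mt + 1) * Bn := by
                have := Nat.lt_succ_self mt
                rw [hmt] at this ⊢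
                exact (Nat.div_lt_iff_lt_mul hBpos).mp this
              have : ((Finset.Icc 1 (t-1)).filter (fun s => mt*Bn + 1 ≤ s)).card ≤ b := by
                rw [hc2] at hc1
                have : (mt+1)*Bn = mt*Bn + Bn := by ring
                omega
              exact_mod_cast this
          _ ≤ β := Nat.floor_le hβ
      · have hphit : φ t = istar := by
          apply Fin.ext
          rw [hφval]
          simpa [istar] using min_eq_right (le_of_not_gt hact)
        rw [hphit]
        simpa using hβ
    · -- error lower bound
      have hlow : ∀ t ∈ Finset.Icc 1 T,
          (if t ≤ (N-1)*Bn then (1:ℝ)/2 else 0) ≤ ∑ k : Fin N,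
            G (φ t) k * (if decide (k ≤ φ t) ≠ decide (istar ≤ φ t) then (1:ℝ) else 0) := by
        intro t ht
        rw [Finset.mem_Icc] at ht
        by_cases hta : t ≤ (N-1)*Bn
        · rw [if_pos hta]
          have hdiv : (t-1)/Bn < N-1 := by
            rw [Nat.div_lt_iff_lt_mul hBpos]
            have : 0 < (N-1) * Bn := Nat.mul_pos (by omega) hBpos
            omega
          have htval : (φ t : ℕ) = (t-1)/Bn := by
            rw [hφval]; exact min_eq_left (le_of_lt hdiv)
          have hist : ¬ (istar ≤ φ t) := by
            rw [Fin.le_def, htval]; simp [istar]; omega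
          have hEt : ∑ k : Fin N,
              G (φ t) k * (if decide (k ≤ φ t) ≠ decide (istar ≤ φ t) then (1:ℝ) else 0)
              = ∑ k : Fin N, (if k ≤ φ t then G (φ t) k else 0) := by
            refine Finset.sum_congr rfl fun k _ => ?_
            by_cases hk : k ≤ φ t
            · simp [hk, hist]
            · simp [hk, hist]
          rw [hEt]
          have hm := h (φ t) (by rw [htval]; exact hdiv)
          have htot : (∑ k : Fin N, (if k ≤ φ t then G (φ t) k else 0))
              + (∑ k : Fin N, (if φ t < k then G (φ t) k else 0)) = 1 := by
            rw [← hG1 (φ t), ← Finset.sum_add_distrib]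
            refine Finset.sum_congr rfl fun k _ => ?_
            by_cases hk : k ≤ φ t
            · simp [hk, not_lt.mpr hk]
            · simp [hk, lt_of_not_ge hk]
          linarith
        · rw [if_neg hta]
          refine Finset.sum_nonneg fun k _ => ?_
          have := hG0 (φ t) k
          split <;> nlinarith
      have hmain := Finset.sum_le_sum hlow
      have hcount : ∑ t ∈ Finset.Icc 1 T, (if t ≤ (N-1)*Bn then (1:ℝ)/2 else 0)
          = ((min T ((N-1)*Bn) : ℕ) : ℝ) * (1/2) := by
        rw [← Finset.sum_filter]
        have : (Finset.Icc 1 T).filter (fun t => t ≤ (N-1)*Bn)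
            = Finset.Icc 1 (min T ((N-1)*Bn)) := by
          ext s
          simp only [Finset.mem_filter, Finset.mem_Icc]
          omega
        rw [this, Finset.sum_const, Nat.card_Icc]
        simp
      rw [hcount] at hmain
      refine le_trans ?_ hmain
      -- arithmetic: (1/8)·min(N(β+1),T) ≤ (1/2)·min(T,(N-1)(b+1))
      have hcastmin : ((min T ((N-1)*Bn) : ℕ) : ℝ)
          = min (T:ℝ) (((N:ℝ)-1) * ((b:ℝ)+1)) := by
        push_cast [Nat.cast_min]
        congr 1
        push_cast [Nat.cast_sub (by omega : 1 ≤ N), hBn]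
        ring
      rw [hcastmin]
      have hbβ : β < (b:ℝ) + 1 := Nat.lt_floor_add_one β
      have hb0 : (0:ℝ) ≤ (b:ℝ) := Nat.cast_nonneg b
      have hN2 : (2:ℝ) ≤ (N:ℝ) := by exact_mod_cast hN
      have hY : (N:ℝ) * (β+1) ≤ 4 * (((N:ℝ)-1) * ((b:ℝ)+1)) := by nlinarith
      rcases le_total (T:ℝ) (((N:ℝ)-1) * ((b:ℝ)+1)) with hc | hc
      · rw [min_eq_left hc]
        have := min_le_right ((N : ℝ) * (β + 1)) (T:ℝ)
        linarith
      · rw [min_eq_right hc]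
        have := min_le_left ((N : ℝ) * (β + 1)) (T:ℝ)
        linarith
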